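/- Let (Ω, 𝒜, μ) be a measure space with 0 < μ(Ω) < ∞, and let ψ : Ω → ℝ be measurable with −1 < ψ(x) < 1 for μ-almost every x, and set m = (1/μ(Ω))·∫_Ω ψ dμ. Let a ∈ (−1, m] be such that μ({x : ψ(x) < a}) > 0. Then for every ε > 0 there exist a_ε ∈ (−1, a) and m_ε ∈ (m, 1) such that the truncated function u(x) = max(a_ε, min(m_ε, ψ(x))) satisfies: (1/μ(Ω))·∫_Ω u dμ = m; μ({x : ψ(x) < a_ε}) > 0; μ({x : ψ(x) > m_ε}) > 0; and (∫_Ω |u − ψ|² dμ)^{1/2} ≤ ε. -/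

import Mathlib

open MeasureTheory

set_option maxHeartbeats 1600000 in
/-- The mass-preserving double-truncation construction: if `ψ` takes values in
`(-1,1)` a.e., has mean `m`, and drops below a level `a ≤ m` on a set of positive
measure, then for every `ε > 0` there are nontrivially attained truncation levels
`aε ∈ (-1,a)` and `mε ∈ (m,1)` such that the chopped function has the same mean `m`
and is within `ε` of `ψ` in `L²(μ)`. -/
theorem stmt13 {Ω : Type*} [MeasurableSpace Ω] (μ : Measure Ω)
    (hμ0 : 0 < μ Set.univ) (hμtop : μ Set.univ < ⊤)
    (ψ : Ω → ℝ) (hmeas : Measurable ψ)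
    (hval : ∀ᵐ x ∂μ, ψ x ∈ Set.Ioo (-1 : ℝ) 1)
    (m : ℝ) (hm : m = (μ Set.univ).toReal⁻¹ * ∫ x, ψ x ∂μ)
    (a : ℝ) (ha : a ∈ Set.Ioc (-1 : ℝ) m)
    (hneg : 0 < μ {x | ψ x < a}) :
    ∀ ε : ℝ, 0 < ε → ∃ aε mε : ℝ,
      aε ∈ Set.Ioo (-1 : ℝ) a ∧ mε ∈ Set.Ioo m 1 ∧
      (μ Set.univ).toReal⁻¹ * (∫ x, max aε (min mε (ψ x)) ∂μ) = m ∧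
      0 < μ {x | ψ x < aε} ∧ 0 < μ {x | mε < ψ x} ∧
      (∫ x, |max aε (min mε (ψ x)) - ψ x| ^ 2 ∂μ) ^ ((1 : ℝ) / 2) ≤ ε := by
  intro ε hε
  have hfin : IsFiniteMeasure μ := ⟨hμtop⟩
  set V : ℝ := (μ Set.univ).toReal with hVdef
  have hV0 : 0 < V := ENNReal.toReal_pos hμ0.ne' hμtop.ne
  -- ψ is integrable
  have hψi : Integrable ψ μ := by
    refine Integrable.mono' (integrable_const 1) hmeas.aestronglyMeasurable ?_
    filter_upwards [hval] with x hx
    rw [Real.norm_eq_abs, abs_le]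
    exact ⟨hx.1.le, hx.2.le⟩
  have hψint : ∫ x, ψ x ∂μ = m * V := by
    rw [hm]; field_simp
  -- null sets outside (-1,1)
  have hlow_null : ∀ s : ℝ, s ≤ -1 → μ {x | ψ x < s} = 0 := by
    intro s hs
    refine measure_mono_null (fun x hx => ?_) (ae_iff.mp hval)
    simp only [Set.mem_setOf_eq] at hx ⊢
    intro hmem
    exact absurd (lt_of_lt_of_le hx hs) (not_lt.mpr hmem.1.le)
  have hhigh_null : ∀ t : ℝ, 1 ≤ t → μ {x | t < ψ x} = 0 := by
    intro t ht
    refine measure_mono_null (fun x hx => ?_) (ae_iff.mp hval)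
    simp only [Set.mem_setOf_eq] at hx ⊢
    intro hmem
    exact absurd (lt_of_le_of_lt ht hx) (not_lt.mpr hmem.2.le)
  -- a level s₀ < a attained with positive measure
  obtain ⟨n₀, hn₀⟩ : ∃ n : ℕ, 0 < μ {x | ψ x < a - 1 / (n + 1)} := by
    by_contra h
    push_neg at h
    have hnull : ∀ n : ℕ, μ {x | ψ x < a - 1 / (n + 1)} = 0 :=
      fun n => le_antisymm (h n) zero_le
    have hsub : {x | ψ x < a} ⊆ ⋃ n : ℕ, {x | ψ x < a - 1 / (n + 1)} := by
      intro x hx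
      simp only [Set.mem_setOf_eq] at hx
      obtain ⟨n, hn⟩ := exists_nat_one_div_lt (show (0:ℝ) < a - ψ x by linarith)
      exact Set.mem_iUnion.2 ⟨n, by simp only [Set.mem_setOf_eq]; linarith⟩
    exact absurd (measure_mono_null hsub (measure_iUnion_null hnull)) hneg.ne'
  set s₀ : ℝ := a - 1 / (n₀ + 1) with hs₀def
  have hs₀a : s₀ < a := by
    have : (0:ℝ) < 1 / (n₀ + 1) := by positivity
    simp only [hs₀def]; linarith
  have hs₀neg1 : -1 < s₀ := by
    by_contra h
    push_neg at h
    exact absurd (hlow_null s₀ h) hn₀.ne'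
  clear_value s₀
  -- ψ exceeds m on a set of positive measure
  have hpos_upper : 0 < μ {x | m < ψ x} := by
    by_contra h
    push_neg at h
    have h0 : μ {x | m < ψ x} = 0 := le_antisymm h zero_le
    have hle : ∀ᵐ x ∂μ, ψ x ≤ m := by
      rw [ae_iff]
      convert h0 using 2
      ext x; simp [not_le]
    have hint0 : ∫ x, (m - ψ x) ∂μ = 0 := by
      rw [integral_sub (integrable_const m) hψi, integral_const, smul_eq_mul, hψint, measureReal_def, ← hVdef]
      ring
    have hzero : (fun x => m - ψ x) =ᵐ[μ] 0 :=
      (integral_eq_zero_iff_of_nonneg_ae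
        (by filter_upwards [hle] with x hx; simp [sub_nonneg, hx])
        ((integrable_const m).sub hψi)).mp hint0
    have : μ {x | ψ x < a} = 0 := by
      refine measure_mono_null (fun x hx => ?_) (ae_iff.mp hzero)
      simp only [Set.mem_setOf_eq, Pi.zero_apply] at hx ⊢
      have := ha.2
      intro hc
      linarith
    exact absurd this hneg.ne'
  -- a level t₀ > m exceeded with positive measure
  obtain ⟨k₀, hk₀⟩ : ∃ n : ℕ, 0 < μ {x | m + 1 / (n + 1) < ψ x} := by
    by_contra h
    push_neg at h
    have hnull : ∀ n : ℕ, μ {x | m + 1 / (n + 1) < ψ x} = 0 :=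
      fun n => le_antisymm (h n) zero_le
    have hsub : {x | m < ψ x} ⊆ ⋃ n : ℕ, {x | m + 1 / (n + 1) < ψ x} := by
      intro x hx
      simp only [Set.mem_setOf_eq] at hx
      obtain ⟨n, hn⟩ := exists_nat_one_div_lt (show (0:ℝ) < ψ x - m by linarith)
      exact Set.mem_iUnion.2 ⟨n, by simp only [Set.mem_setOf_eq]; linarith⟩
    exact absurd (measure_mono_null hsub (measure_iUnion_null hnull)) hpos_upper.ne'
  set t₀ : ℝ := m + 1 / (k₀ + 1) with ht₀def
  have ht₀m : m < t₀ := by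
    have : (0:ℝ) < 1 / (k₀ + 1) := by positivity
    simp only [ht₀def]; linarith
  have ht₀1 : t₀ < 1 := by
    by_contra h
    push_neg at h
    exact absurd (hhigh_null t₀ h) hk₀.ne'
  have hm1 : m < 1 := ht₀m.trans ht₀1
  clear_value t₀
  -- integrability of positive parts
  have hPint : ∀ s : ℝ, Integrable (fun x => max (s - ψ x) 0) μ :=
    fun s => ((integrable_const s).sub hψi).pos_part
  have hQint : ∀ t : ℝ, Integrable (fun x => max (ψ x - t) 0) μ :=
    fun t => (hψi.sub (integrable_const t)).pos_part
  have hPnonneg : ∀ s : ℝ, (0:Ω → ℝ) ≤ᵐ[μ] (fun x => max (s - ψ x) 0) :=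
    fun s => Filter.Eventually.of_forall fun x => le_max_right _ _
  have hQnonneg : ∀ t : ℝ, (0:Ω → ℝ) ≤ᵐ[μ] (fun x => max (ψ x - t) 0) :=
    fun t => Filter.Eventually.of_forall fun x => le_max_right _ _
  have hPsupp : ∀ s : ℝ, Function.support (fun x => max (s - ψ x) 0) = {x | ψ x < s} := by
    intro s; ext x
    simp only [Function.mem_support, Set.mem_setOf_eq]
    constructor
    · intro h
      by_contra hc
      push_neg at hc
      exact h (max_eq_right (by linarith))
    · intro h
      rw [max_eq_left (by linarith)]
      intro hc; linarith
  have hQsupp : ∀ t : ℝ, Function.support (fun x => max (ψ x - t) 0) = {x | t < ψ x} := by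
    intro t; ext x
    simp only [Function.mem_support, Set.mem_setOf_eq]
    constructor
    · intro h
      by_contra hc
      push_neg at hc
      exact h (max_eq_right (by linarith))
    · intro h
      rw [max_eq_left (by linarith)]
      intro hc; linarith
  -- B function
    -- Bf t = ∫ (ψ - t)⁺
  set Bf : ℝ → ℝ := fun t => ∫ x, max (ψ x - t) 0 ∂μ with hBfdef
  have hBm_pos : 0 < Bf m := by
    rw [hBfdef]
    rw [integral_pos_iff_support_of_nonneg_ae (hQnonneg m) (hQint m)]
    rw [hQsupp m]
    exact hpos_upper
  have hBlip : Continuous Bf := by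
    have : LipschitzWith (Real.toNNReal V) Bf := by
      refine LipschitzWith.of_dist_le_mul fun t t' => ?_
      rw [Real.dist_eq, Real.dist_eq]
      have h1 : Bf t - Bf t' = ∫ x, (max (ψ x - t) 0 - max (ψ x - t') 0) ∂μ :=
        (integral_sub (hQint t) (hQint t')).symm
      have h2 : |Bf t - Bf t'| ≤ ∫ x, |max (ψ x - t) 0 - max (ψ x - t') 0| ∂μ := by
        rw [h1]
        simpa [Real.norm_eq_abs] using
          norm_integral_le_integral_norm (fun x => max (ψ x - t) 0 - max (ψ x - t') 0) (μ := μ)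
      have h3 : ∫ x, |max (ψ x - t) 0 - max (ψ x - t') 0| ∂μ ≤ ∫ _x, |t - t'| ∂μ := by
        refine integral_mono ((hQint t).sub (hQint t')).abs (integrable_const _) fun x => ?_
        calc |max (ψ x - t) 0 - max (ψ x - t') 0| ≤ |(ψ x - t) - (ψ x - t')| :=
              abs_max_sub_max_le_abs _ _ _
          _ = |t - t'| := by rw [abs_sub_comm]; ring_nf
      calc |Bf t - Bf t'| ≤ ∫ _x, |t - t'| ∂μ := h2.trans h3
        _ = V * |t - t'| := by rw [integral_const, smul_eq_mul, measureReal_def, ← hVdef]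
        _ = (Real.toNNReal V : ℝ) * |t - t'| := by rw [Real.coe_toNNReal V hV0.le]
    exact this.continuous
  have hB1 : Bf 1 = 0 := by
    rw [hBfdef]
    refine integral_eq_zero_of_ae ?_
    filter_upwards [hval] with x hx
    simp only [Pi.zero_apply]
    exact max_eq_right (by linarith [hx.2])
  -- the infimum of attained lower levels
  set S : Set ℝ := {s : ℝ | 0 < μ {x | ψ x < s}} with hSdef
  have hs₀S : s₀ ∈ S := hn₀
  have hSbdd : BddBelow S := by
    refine ⟨-1, fun s hs => ?_⟩
    by_contra h
    push_neg at h
    exact absurd (hlow_null s h.le) hs.ne'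
  set c : ℝ := sInf S with hcdef
  have hc_le : c ≤ s₀ := csInf_le hSbdd hs₀S
  have hc_ge : -1 ≤ c := le_csInf ⟨s₀, hs₀S⟩ (by
    intro s hs
    by_contra h
    push_neg at h
    exact absurd (hlow_null s h.le) hs.ne')
  have hc_lt_a : c < a := lt_of_le_of_lt hc_le hs₀a
  have hc_ae : ∀ᵐ x ∂μ, c ≤ ψ x := by
    have hnull : μ {x | ψ x < c} = 0 := by
      have hsub : {x | ψ x < c} ⊆ ⋃ n : ℕ, {x | ψ x < c - 1 / (n + 1)} := by
        intro x hx
        simp only [Set.mem_setOf_eq] at hx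
        obtain ⟨n, hn⟩ := exists_nat_one_div_lt (show (0:ℝ) < c - ψ x by linarith)
        exact Set.mem_iUnion.2 ⟨n, by simp only [Set.mem_setOf_eq]; linarith⟩
      refine measure_mono_null hsub (measure_iUnion_null fun n => ?_)
      by_contra h
      have hmem : c - 1 / (n + 1) ∈ S := pos_iff_ne_zero.mpr h
      have : c ≤ c - 1 / (n + 1) := csInf_le hSbdd hmem
      have hp : (0:ℝ) < 1 / (n + 1 : ℝ) := by positivity
      linarith
    rw [ae_iff]
    convert hnull using 2
    ext x; simp [not_le]
  have hc_pos_of_gt : ∀ s : ℝ, c < s → 0 < μ {x | ψ x < s} := by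
    intro s hs
    obtain ⟨s', hs'S, hs'lt⟩ := exists_lt_of_csInf_lt ⟨s₀, hs₀S⟩ hs
    exact lt_of_lt_of_le hs'S (measure_mono fun x hx => lt_trans hx hs'lt)
  clear_value c
  -- choose the lower level s
  set δ : ℝ := min (ε ^ 2 / 4) (Bf m / 2) with hδdef
  have hδpos : 0 < δ := lt_min (by positivity) (by linarith)
  have hδ1 : δ ≤ ε ^ 2 / 4 := min_le_left _ _
  have hδ2 : δ ≤ Bf m / 2 := min_le_right _ _
  clear_value δ
  set s : ℝ := min ((c + a) / 2) (c + δ / V) with hsdef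
  have hs_gt_c : c < s := by
    refine lt_min (by linarith) ?_
    have : 0 < δ / V := by positivity
    linarith
  have hs_lt_a : s < a := lt_of_le_of_lt (min_le_left _ _) (by linarith)
  have hs_gt_neg1 : -1 < s := lt_of_le_of_lt hc_ge hs_gt_c
  have hs_pos : 0 < μ {x | ψ x < s} := hc_pos_of_gt s hs_gt_c
  have hs_sub : s - c ≤ δ / V := by
    have := min_le_right ((c + a) / 2) (c + δ / V)
    simp only [hsdef]; linarith
  clear_value s
  -- the amount of mass added below
  have hA_le : ∫ x, max (s - ψ x) 0 ∂μ ≤ δ := by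
    have h1 : ∫ x, max (s - ψ x) 0 ∂μ ≤ ∫ _x, (s - c) ∂μ := by
      refine integral_mono_ae (hPint s) (integrable_const _) ?_
      filter_upwards [hc_ae] with x hx
      exact max_le (by linarith) (by linarith)
    calc ∫ x, max (s - ψ x) 0 ∂μ ≤ ∫ _x, (s - c) ∂μ := h1
      _ = V * (s - c) := by rw [integral_const, smul_eq_mul, measureReal_def, ← hVdef]
      _ ≤ V * (δ / V) := by
          exact mul_le_mul_of_nonneg_left hs_sub hV0.le
      _ = δ := by field_simp
  have hA_pos : 0 < ∫ x, max (s - ψ x) 0 ∂μ := by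
    rw [integral_pos_iff_support_of_nonneg_ae (hPnonneg s) (hPint s), hPsupp s]
    exact hs_pos
  set A : ℝ := ∫ x, max (s - ψ x) 0 ∂μ with hAdef
  clear_value A
  -- find the upper level t with Bf t = A
  have hA_lt_Bm : A < Bf m := by
    calc A ≤ δ := hA_le
      _ ≤ Bf m / 2 := hδ2
      _ < Bf m := by linarith
  obtain ⟨t, htmem, htB⟩ : ∃ t ∈ Set.Ioo m 1, Bf t = A := by
    have := intermediate_value_Ioo' (le_of_lt hm1) hBlip.continuousOn
      (show A ∈ Set.Ioo (Bf 1) (Bf m) by rw [hB1]; exact ⟨hA_pos, hA_lt_Bm⟩)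
    obtain ⟨t, ht, htB⟩ := this
    exact ⟨t, ht, htB⟩
  have ht_pos : 0 < μ {x | t < ψ x} := by
    have : 0 < Bf t := htB ▸ hA_pos
    rw [hBfdef] at this
    rw [integral_pos_iff_support_of_nonneg_ae (hQnonneg t) (hQint t)] at this
    rwa [hQsupp t] at this
  have hst : s ≤ t := le_of_lt (lt_trans (hs_lt_a.trans_le ha.2) htmem.1)
  -- the pointwise decomposition of the truncation
  have key : ∀ x, max s (min t (ψ x)) = ψ x + max (s - ψ x) 0 - max (ψ x - t) 0 := by
    intro x
    simp only [max_def, min_def]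
    split_ifs <;> linarith
  refine ⟨s, t, ⟨hs_gt_neg1, hs_lt_a⟩, htmem, ?_, hs_pos, ht_pos, ?_⟩
  · -- mean is preserved
    have hIu : ∫ x, max s (min t (ψ x)) ∂μ = ∫ x, ψ x ∂μ := by
      have h1 : ∫ x, max s (min t (ψ x)) ∂μ
          = ∫ x, (ψ x + max (s - ψ x) 0 - max (ψ x - t) 0) ∂μ := by
        congr 1
        funext x
        exact key x
      have hadd : Integrable (fun x => ψ x + max (s - ψ x) 0) μ := hψi.add (hPint s)
      have hBt : (∫ x, max (ψ x - t) 0 ∂μ) = A := htB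
      rw [h1, integral_sub hadd (hQint t), integral_add hψi (hPint s), ← hAdef, hBt]
      ring
    rw [hIu, ← hm]
  · -- L² estimate
    have hsq : ∀ᵐ x ∂μ, |max s (min t (ψ x)) - ψ x| ^ 2
        ≤ 2 * max (s - ψ x) 0 + 2 * max (ψ x - t) 0 := by
      filter_upwards [hval] with x hx
      rw [sq_abs, key x]
      have hs1 : s < 1 := lt_trans hs_lt_a (lt_of_le_of_lt ha.2 hm1)
      have ht1 : -1 < t := lt_trans ha.1 (lt_of_le_of_lt ha.2 htmem.1)
      rcases le_total (ψ x) s with h1 | h1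
      · have hP : max (s - ψ x) 0 = s - ψ x := max_eq_left (by linarith)
        have hQ : max (ψ x - t) 0 = 0 := max_eq_right (by linarith)
        rw [hP, hQ]
        nlinarith [hx.1, hs1]
      · rcases le_total (ψ x) t with h2 | h2
        · have hP : max (s - ψ x) 0 = 0 := max_eq_right (by linarith)
          have hQ : max (ψ x - t) 0 = 0 := max_eq_right (by linarith)
          rw [hP, hQ]; norm_num
        · have hP : max (s - ψ x) 0 = 0 := max_eq_right (by linarith)
          have hQ : max (ψ x - t) 0 = ψ x - t := max_eq_left (by linarith)
          rw [hP, hQ]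
          nlinarith [hx.2, ht1]
    have hgint : Integrable (fun x => 2 * max (s - ψ x) 0 + 2 * max (ψ x - t) 0) μ :=
      ((hPint s).const_mul 2).add ((hQint t).const_mul 2)
    have humeas : Measurable fun x => max s (min t (ψ x)) :=
      measurable_const.max (measurable_const.min hmeas)
    have hfint : Integrable (fun x => |max s (min t (ψ x)) - ψ x| ^ 2) μ := by
      refine Integrable.mono' hgint (((humeas.sub hmeas).abs.pow measurable_const).aestronglyMeasurable) ?_
      filter_upwards [hsq] with x hx
      rw [Real.norm_eq_abs, abs_of_nonneg (by positivity)]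
      exact hx
    have hle : ∫ x, |max s (min t (ψ x)) - ψ x| ^ 2 ∂μ ≤ ε ^ 2 := by
      calc ∫ x, |max s (min t (ψ x)) - ψ x| ^ 2 ∂μ
          ≤ ∫ x, (2 * max (s - ψ x) 0 + 2 * max (ψ x - t) 0) ∂μ :=
            integral_mono_ae hfint hgint hsq
        _ = 2 * A + 2 * A := by
            have hBt : (∫ x, max (ψ x - t) 0 ∂μ) = A := htB
            rw [integral_add ((hPint s).const_mul 2) ((hQint t).const_mul 2),
              integral_const_mul, integral_const_mul, ← hAdef, hBt]
        _ = 4 * A := by ring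
        _ ≤ 4 * δ := by linarith
        _ ≤ ε ^ 2 := by linarith
    have h0 : 0 ≤ ∫ x, |max s (min t (ψ x)) - ψ x| ^ 2 ∂μ :=
      integral_nonneg fun x => by positivity
    calc (∫ x, |max s (min t (ψ x)) - ψ x| ^ 2 ∂μ) ^ ((1:ℝ)/2)
        ≤ (ε ^ 2) ^ ((1:ℝ)/2) := Real.rpow_le_rpow h0 hle (by norm_num)
      _ = ε := by
          rw [← Real.rpow_natCast ε 2, ← Real.rpow_mul hε.le]
          norm_num
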